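/- Let Φ be a flow on ℝ^d such that DΦ_t(x) has all entries strictly positive for every x and every t > 0 (positive derivatives). Then Φ is strongly monotone: if x > y (x ≥ y componentwise and x ≠ y), then Φ_t(x) ≫ Φ_t(y) (strict inequality in every coordinate) for all t > 0. -/

import Mathlib

open Set

/-- If the flow `Φ` has derivative matrices with all entries strictly positive for
`t > 0`, then it is strongly monotone: `x > y` (componentwise, `x ≠ y`) implies
`Φ_t(x) ≫ Φ_t(y)` for every `t > 0`. -/
theorem strongly_monotone_of_positive_derivatives (d : ℕ)
    (Φ : ℝ → (Fin d → ℝ) → (Fin d → ℝ))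
    (D : ℝ → (Fin d → ℝ) → ((Fin d → ℝ) →L[ℝ] (Fin d → ℝ)))
    (hderiv : ∀ t > (0:ℝ), ∀ x, HasFDerivAt (Φ t) (D t x) x)
    (hpos : ∀ t > (0:ℝ), ∀ x, ∀ i j : Fin d, 0 < D t x (Pi.single j 1) i) :
    ∀ t > (0:ℝ), ∀ x y : Fin d → ℝ,
      (∀ j, y j ≤ x j) → x ≠ y → ∀ i, Φ t y i < Φ t x i := by
  intro t ht x y hle hne i
  obtain ⟨j0, hj0⟩ : ∃ j, y j < x j := by
    by_contra h
    push_neg at h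
    exact hne (funext fun j => le_antisymm (h j) (hle j))
  set v : Fin d → ℝ := x - y with hv
  have hv0 : ∀ j, 0 ≤ v j := fun j => sub_nonneg.2 (hle j)
  have hvj0 : 0 < v j0 := sub_pos.2 hj0
  -- positivity of the directional derivative
  have hDpos : ∀ z : Fin d → ℝ, 0 < D t z v i := by
    intro z
    have hrep : v = ∑ j, v j • (Pi.single j 1 : Fin d → ℝ) := by
      ext k
      simp [Finset.sum_apply, Pi.single_apply]
    have : D t z v i = ∑ j, v j * D t z (Pi.single j 1) i := by
      conv_lhs => rw [hrep]
      rw [map_sum]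
      simp [Finset.sum_apply]
    rw [this]
    refine Finset.sum_pos' (fun j _ => mul_nonneg (hv0 j) (hpos t ht z i j).le) ?_
    exact ⟨j0, Finset.mem_univ _, mul_pos hvj0 (hpos t ht z i j0)⟩
  -- the function along the segment
  have key : ∀ s : ℝ,
      HasDerivAt (fun s => Φ t (y + s • v) i) (D t (y + s • v) v i) s := by
    intro s
    have h1 : HasDerivAt (fun s : ℝ => y + s • v) v s := by
      simpa using ((hasDerivAt_id s).smul_const v).const_add y
    have h2 : HasDerivAt (fun s : ℝ => Φ t (y + s • v)) (D t (y + s • v) v) s :=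
      (hderiv t ht (y + s • v)).comp_hasDerivAt s h1
    have h3 := (ContinuousLinearMap.proj (R := ℝ) (φ := fun _ : Fin d => ℝ) i
      ).hasFDerivAt.comp_hasDerivAt s h2
    exact h3
  have hmono : StrictMono (fun s => Φ t (y + s • v) i) :=
    strictMono_of_deriv_pos (fun s => by
      rw [(key s).deriv]; exact hDpos _)
  have h01 := hmono (show (0:ℝ) < 1 by norm_num)
  simpa [hv] using h01
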